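/- An ultrafilter U on ℕ is maximal with respect to finite embeddability (i.e., V ⊴_fe U for every ultrafilter V) if and only if every set A ∈ U is piecewise syndetic. Equivalently, the set of maximal ultrafilters equals the closure of the smallest two-sided ideal K(βℕ,⊕). -/

import Mathlib

/-- A set of naturals is thick if it contains arbitrarily long intervals. -/
def Thick (A : Set ℕ) : Prop := ∀ k : ℕ, ∃ a : ℕ, ∀ i < k, a + i ∈ A

/-- `A` is piecewise syndetic if some finite union of translates `A - i`, `i ≤ n`, is thick. -/
def PiecewiseSyndetic (A : Set ℕ) : Prop :=
  ∃ n : ℕ, Thick {m : ℕ | ∃ i ≤ n, m + i ∈ A}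

/-- `A ≤_fe B`: every finite subset of `A` has a translate contained in `B`. -/
def fe (A B : Set ℕ) : Prop :=
  ∀ F : Finset ℕ, ↑F ⊆ A → ∃ n : ℕ, ∀ a ∈ F, n + a ∈ B

/-- The sum of ultrafilters on ℕ: `A ∈ usum U V ↔ {n | {m | n + m ∈ A} ∈ V} ∈ U`. -/
def usum (U V : Ultrafilter ℕ) : Ultrafilter ℕ :=
  U.bind fun n => V.map fun m => n + m

/-- Finite embeddability of ultrafilters: `U ⊴_fe V` iff every `B ∈ V`
contains a finitely embedded `A ∈ U`. -/
def ufe (U V : Ultrafilter ℕ) : Prop := ∀ B ∈ V, ∃ A ∈ U, fe A B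

/-- Two-sided ideals of the semigroup `(βℕ, ⊕)`. -/
def IsTwoSidedIdeal (I : Set (Ultrafilter ℕ)) : Prop :=
  I.Nonempty ∧ ∀ U ∈ I, ∀ V : Ultrafilter ℕ, usum U V ∈ I ∧ usum V U ∈ I

/-- `K(βℕ, ⊕)`, the smallest two-sided ideal of `(βℕ, ⊕)`. -/
def KIdeal : Set (Ultrafilter ℕ) := ⋂₀ {I : Set (Ultrafilter ℕ) | IsTwoSidedIdeal I}


open Filter Set

attribute [local instance] Ultrafilter.add Ultrafilter.addSemigroup


lemma Thick.mono {A B : Set ℕ} (hA : Thick A) (h : A ⊆ B) : Thick B :=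
  fun k => (hA k).imp fun a ha i hi => h (ha i hi)

lemma PiecewiseSyndetic.mono {A B : Set ℕ} (hA : PiecewiseSyndetic A) (h : A ⊆ B) :
    PiecewiseSyndetic B := by
  obtain ⟨n, hn⟩ := hA
  exact ⟨n, hn.mono fun m hm => by obtain ⟨i, hi, hm⟩ := hm; exact ⟨i, hi, h hm⟩⟩

lemma ps_univ : PiecewiseSyndetic (Set.univ : Set ℕ) :=
  ⟨0, fun k => ⟨0, fun i _ => ⟨0, le_refl 0, trivial⟩⟩⟩

lemma not_ps_empty : ¬ PiecewiseSyndetic (∅ : Set ℕ) := by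
  rintro ⟨n, hn⟩
  obtain ⟨a, ha⟩ := hn 1
  obtain ⟨i, -, hi⟩ := ha 0 one_pos
  exact hi

lemma ps_union {A B : Set ℕ} (h : PiecewiseSyndetic (A ∪ B)) :
    PiecewiseSyndetic A ∨ PiecewiseSyndetic B := by
  by_contra hc
  push_neg at hc
  obtain ⟨hA, hB⟩ := hc
  obtain ⟨n, hT⟩ := h
  have hAn : ¬ Thick {m : ℕ | ∃ i ≤ n, m + i ∈ A} := fun h' => hA ⟨n, h'⟩
  unfold Thick at hAn
  push_neg at hAn
  obtain ⟨k, hk⟩ := hAn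
  apply hB
  refine ⟨n + k, fun L => ?_⟩
  obtain ⟨a, ha⟩ := hT (L + k)
  refine ⟨a, fun x hx => ?_⟩
  obtain ⟨j, hj, hjA⟩ := hk (a + x)
  simp only [mem_setOf_eq, not_exists, not_and] at hjA
  obtain ⟨i, hi, hmem⟩ := ha (x + j) (by omega)
  rw [← add_assoc] at hmem
  rcases hmem with hmem | hmem
  · exact absurd hmem (hjA i hi)
  · exact ⟨j + i, by omega, by rw [show a + x + (j + i) = a + x + j + i by ring]; exact hmem⟩

lemma ps_sUnion {s : Set (Set ℕ)} (hs : s.Finite) (h : PiecewiseSyndetic (⋃₀ s)) :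
    ∃ A ∈ s, PiecewiseSyndetic A := by
  refine Set.Finite.induction_on s hs
    (motive := fun s _ => PiecewiseSyndetic (⋃₀ s) → ∃ A ∈ s, PiecewiseSyndetic A) ?_ ?_ h
  · intro h'; rw [Set.sUnion_empty] at h'; exact absurd h' not_ps_empty
  · intro A s _ _ ih h'
    rw [Set.sUnion_insert] at h'
    rcases ps_union h' with h' | h'
    · exact ⟨A, Set.mem_insert _ _, h'⟩
    · obtain ⟨C, hC, hC'⟩ := ih h'
      exact ⟨C, Set.mem_insert_of_mem _ hC, hC'⟩

/-- There is an ultrafilter all of whose members are piecewise syndetic. -/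
lemma exists_ps_ultrafilter : ∃ V : Ultrafilter ℕ, ∀ A ∈ V, PiecewiseSyndetic A := by
  set G : Set (Set ℕ) := {S | ¬ PiecewiseSyndetic Sᶜ} with hG
  have hne : (Filter.generate G).NeBot := by
    rw [Filter.generate_neBot_iff]
    intro t ht htfin
    by_contra hemp
    rw [Set.not_nonempty_iff_eq_empty] at hemp
    have huniv : ⋃₀ (compl '' t) = Set.univ := by
      rw [Set.sUnion_image]
      rw [Set.eq_univ_iff_forall]
      intro x
      simp only [Set.mem_iUnion, Set.mem_compl_iff]
      by_contra hx
      push_neg at hx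
      have : x ∈ ⋂₀ t := fun B hB => hx B hB
      rw [hemp] at this
      exact this
    have hps : PiecewiseSyndetic (⋃₀ (compl '' t)) := by rw [huniv]; exact ps_univ
    obtain ⟨A, hA, hA'⟩ := ps_sUnion (htfin.image compl) hps
    obtain ⟨B, hB, rfl⟩ := hA
    exact (ht hB) hA'
  obtain ⟨V, hV⟩ := Ultrafilter.exists_le (Filter.generate G)
  refine ⟨V, fun A hA => ?_⟩
  by_contra hps
  have : Aᶜ ∈ V := hV (Filter.mem_generate_of_mem (by simpa [hG] using hps))
  exact (Ultrafilter.compl_notMem_iff.mpr hA) this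

lemma fe_ps {C A : Set ℕ} (hC : PiecewiseSyndetic C) (hfe : fe C A) :
    PiecewiseSyndetic A := by
  obtain ⟨n, hT⟩ := hC
  refine ⟨n, fun k => ?_⟩
  obtain ⟨a, ha⟩ := hT k
  have hch : ∀ j, ∃ i, i ≤ n ∧ (j < k → a + j + i ∈ C) := by
    intro j
    by_cases hj : j < k
    · obtain ⟨i, hi, hmem⟩ := ha j hj
      exact ⟨i, hi, fun _ => hmem⟩
    · exact ⟨0, Nat.zero_le n, fun h' => absurd h' hj⟩
  choose g hg1 hg2 using hch
  set F : Finset ℕ := (Finset.range k).image (fun j => a + j + g j) with hF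
  have hFC : ↑F ⊆ C := by
    intro x hx
    simp only [hF, Finset.coe_image, Finset.coe_range, Set.mem_image, Set.mem_Iio] at hx
    obtain ⟨j, hj, rfl⟩ := hx
    exact hg2 j hj
  obtain ⟨t, ht⟩ := hfe F hFC
  refine ⟨t + a, fun x hx => ?_⟩
  refine ⟨g x, hg1 x, ?_⟩
  have : t + (a + x + g x) ∈ A := ht _ (Finset.mem_image_of_mem _ (Finset.mem_range.mpr hx))
  rwa [show t + a + x + g x = t + (a + x + g x) by ring]

/-- The key construction: if `B` is piecewise syndetic then every ultrafilter contains
a set finitely embeddable in `B`. -/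
lemma ps_fe {B : Set ℕ} (hB : PiecewiseSyndetic B) (V : Ultrafilter ℕ) :
    ∃ A ∈ V, fe A B := by
  obtain ⟨n, hT⟩ := hB
  choose a ha using hT
  have hcol : ∀ k j, ∃ i, i ≤ n ∧ (j < k → a k + j + i ∈ B) := by
    intro k j
    by_cases hj : j < k
    · obtain ⟨i, hi, hmem⟩ := ha k j hj
      exact ⟨i, hi, fun _ => hmem⟩
    · exact ⟨0, Nat.zero_le n, fun h' => absurd h' hj⟩
  choose c hc1 hc2 using hcol
  obtain ⟨W, hW⟩ := Ultrafilter.exists_le (Filter.atTop : Filter ℕ)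
  -- limit coloring
  have hlim : ∀ j, ∃ i, i ≤ n ∧ {k | c k j = i} ∈ W := by
    intro j
    have hmem : Set.Iic n ∈ W.map (fun k => c k j) := by
      rw [Ultrafilter.mem_map]
      exact Filter.mem_of_superset Filter.univ_mem (fun k _ => hc1 k j)
    obtain ⟨i, hi, hpure⟩ := Ultrafilter.eq_pure_of_finite_mem (Set.finite_Iic n) hmem
    refine ⟨i, hi, ?_⟩
    have : {i} ∈ W.map (fun k => c k j) := by rw [hpure]; exact rfl
    simpa [Ultrafilter.mem_map, Set.preimage, Set.mem_singleton_iff] using this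
  choose c' hc'1 hc'2 using hlim
  have main : ∀ m, ∃ t, ∀ j < m, t + j + c' j ∈ B := by
    intro m
    have h1 : (⋂ j ∈ Set.Iio m, {k | c k j = c' j}) ∈ W :=
      (Filter.biInter_mem (Set.finite_Iio m)).mpr (fun j _ => hc'2 j)
    have h2 : {k | m ≤ k} ∈ W := hW (Filter.mem_atTop m)
    obtain ⟨k, hk⟩ := Ultrafilter.nonempty_of_mem (Filter.inter_mem h1 h2)
    obtain ⟨hk1, hk2⟩ := hk
    simp only [Set.mem_iInter, Set.mem_Iio, Set.mem_setOf_eq] at hk1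
    refine ⟨a k, fun j hj => ?_⟩
    rw [← hk1 j hj]
    exact hc2 k j (lt_of_lt_of_le hj hk2)
  -- pick the color class belonging to V
  have hVc : ∃ i, i ≤ n ∧ {j | c' j = i} ∈ V := by
    have hmem : Set.Iic n ∈ V.map c' := by
      rw [Ultrafilter.mem_map]
      exact Filter.mem_of_superset Filter.univ_mem (fun j _ => hc'1 j)
    obtain ⟨i, hi, hpure⟩ := Ultrafilter.eq_pure_of_finite_mem (Set.finite_Iic n) hmem
    refine ⟨i, hi, ?_⟩
    have : {i} ∈ V.map c' := by rw [hpure]; exact rfl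
    simpa [Ultrafilter.mem_map, Set.preimage, Set.mem_singleton_iff] using this
  obtain ⟨i, hin, hiV⟩ := hVc
  refine ⟨{j | c' j = i}, hiV, fun F hF => ?_⟩
  obtain ⟨t, ht⟩ := main (F.sup id + 1)
  refine ⟨t + i, fun f hf => ?_⟩
  have hfi : c' f = i := hF hf
  have hflt : f < F.sup id + 1 := Nat.lt_succ_of_le (Finset.le_sup (f := id) hf)
  have := ht f hflt
  rw [hfi] at this
  rwa [show t + i + f = t + f + i by ring]

attribute [local instance] Ultrafilter.add Ultrafilter.addSemigroup

lemma mem_usum {A : Set ℕ} {U V : Ultrafilter ℕ} :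
    A ∈ usum U V ↔ {n | {m | n + m ∈ A} ∈ V} ∈ U := Iff.rfl

lemma usum_eq_add (U V : Ultrafilter ℕ) : usum U V = U + V := rfl

lemma usum_assoc (U V W : Ultrafilter ℕ) : usum (usum U V) W = usum U (usum V W) := by
  simp only [usum_eq_add]; exact add_assoc U V W

def LeftIdeals : Set (Set (Ultrafilter ℕ)) :=
  {C | C.Nonempty ∧ IsClosed C ∧ ∀ u ∈ C, ∀ W, usum W u ∈ C}

lemma exists_minimal_leftIdeal :
    ∃ L ∈ LeftIdeals, ∀ C ∈ LeftIdeals, C ⊆ L → C = L := by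
  have hchain_cond : ∀ c ⊆ LeftIdeals, IsChain (· ⊆ ·) c → c.Nonempty →
      ∃ lb ∈ LeftIdeals, ∀ s ∈ c, lb ⊆ s := by
    intro c hc hchain hcne
    refine ⟨⋂₀ c, ⟨?_, ?_, ?_⟩, fun s hs => Set.sInter_subset_of_mem hs⟩
    · have : Nonempty c := hcne.to_subtype
      exact IsCompact.nonempty_sInter_of_directed_nonempty_isCompact_isClosed
        (IsChain.directedOn hchain.symm)
        (fun C hC => (hc hC).1)
        (fun C hC => (hc hC).2.1.isCompact)
        (fun C hC => (hc hC).2.1)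
    · exact isClosed_sInter fun C hC => (hc hC).2.1
    · intro u hu W
      exact Set.mem_sInter.mpr fun C hC => (hc hC).2.2 u (Set.mem_sInter.mp hu C hC) W
  have huniv : Set.univ ∈ LeftIdeals :=
    ⟨⟨pure 0, Set.mem_univ _⟩, isClosed_univ, fun _ _ _ => Set.mem_univ _⟩
  obtain ⟨m, -, hmin⟩ := zorn_superset_nonempty LeftIdeals hchain_cond Set.univ huniv
  exact ⟨m, hmin.1, fun C hC hsub => subset_antisymm hsub (hmin.2 hC hsub)⟩

lemma exists_leftIdeal_subset_kIdeal : ∃ L ∈ LeftIdeals, L ⊆ KIdeal := by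
  obtain ⟨L, ⟨hLne, hLcl, hLid⟩, hmin⟩ := exists_minimal_leftIdeal
  refine ⟨L, ⟨hLne, hLcl, hLid⟩, fun u hu => Set.mem_sInter.mpr fun I hI => ?_⟩
  obtain ⟨v, hv⟩ := hI.1
  obtain ⟨u₀, hu₀⟩ := hLne
  set w := usum v u₀ with hw
  have hwL : w ∈ L := hLid u₀ hu₀ v
  have hwI : w ∈ I := (hI.2 v hv u₀).1
  set C := Set.range (fun W => usum W w) with hC
  have hCL : C ∈ LeftIdeals := by
    refine ⟨⟨usum (pure 0) w, ⟨pure 0, rfl⟩⟩, ?_, ?_⟩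
    · have hcont : Continuous fun W : Ultrafilter ℕ => usum W w :=
        Ultrafilter.continuous_add_left w
      exact (isCompact_range hcont).isClosed
    · rintro x ⟨W, rfl⟩ W'
      exact ⟨usum W' W, usum_assoc W' W w⟩
  have hCsub : C ⊆ L := by rintro x ⟨W, rfl⟩; exact hLid w hwL W
  have hCeq : C = L := hmin C hCL hCsub
  rw [← hCeq] at hu
  obtain ⟨W, rfl⟩ := hu
  exact (hI.2 w hwI W).2

lemma kIdeal_twoSided : IsTwoSidedIdeal KIdeal := by
  obtain ⟨L, hL, hsub⟩ := exists_leftIdeal_subset_kIdeal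
  obtain ⟨u, hu⟩ := hL.1
  refine ⟨⟨u, hsub hu⟩, fun U hU V => ?_⟩
  constructor
  · exact Set.mem_sInter.mpr fun I hI => (hI.2 U (Set.mem_sInter.mp hU I hI) V).1
  · exact Set.mem_sInter.mpr fun I hI => (hI.2 U (Set.mem_sInter.mp hU I hI) V).2

lemma thick_ultrafilter {T : Set ℕ} (hT : Thick T) :
    ∃ p : Ultrafilter ℕ, ∀ n, {m | n + m ∈ T} ∈ p := by
  set G : Set (Set ℕ) := Set.range (fun n => {m | n + m ∈ T}) with hG
  have key : ∀ t : Set (Set ℕ), t.Finite → t ⊆ G →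
      ∃ N, ∀ S ∈ t, ∃ n ≤ N, S = {m | n + m ∈ T} := by
    intro t htfin
    refine Set.Finite.induction_on t htfin
      (motive := fun t _ => t ⊆ G → ∃ N, ∀ S ∈ t, ∃ n ≤ N, S = {m | n + m ∈ T}) ?_ ?_
    · intro _; exact ⟨0, by simp⟩
    · intro S t _ _ ih hsub
      obtain ⟨n₀, hn₀⟩ := hsub (Set.mem_insert _ _)
      obtain ⟨N, hN⟩ := ih (Set.Subset.trans (Set.subset_insert _ _) hsub)
      refine ⟨max N n₀, fun S' hS' => ?_⟩
      rcases hS' with rfl | hS'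
      · exact ⟨n₀, le_max_right _ _, hn₀.symm⟩
      · obtain ⟨n, hn, hn'⟩ := hN S' hS'
        exact ⟨n, le_trans hn (le_max_left _ _), hn'⟩
  have hne : (Filter.generate G).NeBot := by
    rw [Filter.generate_neBot_iff]
    intro t ht htfin
    obtain ⟨N, hN⟩ := key t htfin ht
    obtain ⟨a, ha⟩ := hT (N + 1)
    refine ⟨a, fun S hS => ?_⟩
    obtain ⟨n, hn, rfl⟩ := hN S hS
    show n + a ∈ T
    rw [add_comm]
    exact ha n (by omega)
  obtain ⟨p, hp⟩ := Ultrafilter.exists_le (Filter.generate G)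
  exact ⟨p, fun n => hp (Filter.mem_generate_of_mem ⟨n, rfl⟩)⟩

lemma ps_mem_kIdeal {A : Set ℕ} (hA : PiecewiseSyndetic A) : ∃ W ∈ KIdeal, A ∈ W := by
  obtain ⟨n, hT⟩ := hA
  obtain ⟨p, hp⟩ := thick_ultrafilter hT
  obtain ⟨u₀, hu₀⟩ := kIdeal_twoSided.1
  set r := usum u₀ p with hr
  have hrK : r ∈ KIdeal := (kIdeal_twoSided.2 u₀ hu₀ p).1
  have hTr : {m | ∃ i ≤ n, m + i ∈ A} ∈ r := by
    rw [hr, mem_usum]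
    exact Filter.mem_of_superset Filter.univ_mem (fun n' _ => hp n')
  have hsplit : {m | ∃ i ≤ n, m + i ∈ A} = ⋃ i ∈ Set.Iic n, {m | m + i ∈ A} := by
    ext m; simp
  rw [hsplit] at hTr
  obtain ⟨i, hi, hir⟩ := (Ultrafilter.finite_biUnion_mem_iff (Set.finite_Iic n)).mp hTr
  refine ⟨usum (pure i) r, (kIdeal_twoSided.2 r hrK (pure i)).2, ?_⟩
  rw [mem_usum]
  have : {n' | {m | n' + m ∈ A} ∈ r} ∈ (pure i : Ultrafilter ℕ) ↔
      {m | i + m ∈ A} ∈ r := Ultrafilter.mem_pure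
  rw [this]
  have : {m | i + m ∈ A} = {m | m + i ∈ A} := by
    ext m
    simp only [Set.mem_setOf_eq, add_comm]
  rw [this]; exact hir

def clPS : Set (Ultrafilter ℕ) := {U : Ultrafilter ℕ | ∀ A ∈ U, PiecewiseSyndetic A}

lemma clPS_twoSided : IsTwoSidedIdeal clPS := by
  obtain ⟨V₀, hV₀⟩ := exists_ps_ultrafilter
  refine ⟨⟨V₀, hV₀⟩, fun U hU V => ⟨?_, ?_⟩⟩
  · intro A hA
    rw [mem_usum] at hA
    obtain ⟨n₀, hT⟩ := hU _ hA
    refine ⟨n₀, fun k => ?_⟩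
    obtain ⟨a, ha⟩ := hT k
    have hch : ∀ j, ∃ i, i ≤ n₀ ∧ (j < k → {m | a + j + i + m ∈ A} ∈ V) := by
      intro j
      by_cases hj : j < k
      · obtain ⟨i, hi, hmem⟩ := ha j hj
        exact ⟨i, hi, fun _ => hmem⟩
      · exact ⟨0, Nat.zero_le _, fun h => absurd h hj⟩
    choose g hg1 hg2 using hch
    have hint : (⋂ j ∈ Set.Iio k, {m | a + j + g j + m ∈ A}) ∈ V :=
      (Filter.biInter_mem (Set.finite_Iio k)).mpr (fun j hj => hg2 j hj)
    obtain ⟨m, hm⟩ := Ultrafilter.nonempty_of_mem hint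
    simp only [Set.mem_iInter, Set.mem_Iio, Set.mem_setOf_eq] at hm
    refine ⟨a + m, fun x hx => ⟨g x, hg1 x, ?_⟩⟩
    have := hm x hx
    rwa [show a + m + x + g x = a + x + g x + m by ring]
  · intro A hA
    rw [mem_usum] at hA
    obtain ⟨n', hn'⟩ := Ultrafilter.nonempty_of_mem hA
    obtain ⟨n₀, hT⟩ := hU _ hn'
    refine ⟨n₀ + n', hT.mono ?_⟩
    rintro m ⟨i, hi, hmem⟩
    exact ⟨i + n', by omega, by rwa [show m + (i + n') = n' + (m + i) by ring]⟩

lemma clPS_closed : IsClosed clPS := by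
  have heq : clPS = ⋂ A ∈ {A : Set ℕ | ¬ PiecewiseSyndetic A}, {U : Ultrafilter ℕ | A ∈ U}ᶜ := by
    ext U
    simp only [Set.mem_iInter, Set.mem_compl_iff, Set.mem_setOf_eq, clPS]
    constructor
    · intro h A hA hAU
      exact hA (h A hAU)
    · intro h A hAU
      by_contra hps
      exact h A hps hAU
  rw [heq]
  exact isClosed_biInter fun A _ => (ultrafilter_isOpen_basic A).isClosed_compl

lemma closure_kIdeal : closure KIdeal = clPS := by
  apply Set.Subset.antisymm
  · exact closure_minimal (Set.sInter_subset_of_mem clPS_twoSided) clPS_closed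
  · intro U hU
    rw [ultrafilterBasis_is_basis.mem_closure_iff]
    rintro o ⟨s, rfl⟩ hUo
    obtain ⟨W, hWK, hsW⟩ := ps_mem_kIdeal (hU s hUo)
    exact ⟨W, hsW, hWK⟩


/-- `U` is `⊴_fe`-maximal iff all its members are piecewise syndetic;
equivalently, the maximal ultrafilters form the closure of `K(βℕ, ⊕)`. -/
theorem stmt11 :
    (∀ U : Ultrafilter ℕ,
      (∀ V : Ultrafilter ℕ, ufe V U) ↔ ∀ A ∈ U, PiecewiseSyndetic A) ∧
    {U : Ultrafilter ℕ | ∀ V : Ultrafilter ℕ, ufe V U} = closure KIdeal := by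
  have part1 : ∀ U : Ultrafilter ℕ,
      (∀ V : Ultrafilter ℕ, ufe V U) ↔ ∀ A ∈ U, PiecewiseSyndetic A := by
    intro U
    constructor
    · intro hmax A hA
      obtain ⟨V₀, hV₀⟩ := exists_ps_ultrafilter
      obtain ⟨C, hCV, hCfe⟩ := hmax V₀ A hA
      exact fe_ps (hV₀ C hCV) hCfe
    · intro hps V B hB
      exact ps_fe (hps B hB) V
  refine ⟨part1, ?_⟩
  have hset : {U : Ultrafilter ℕ | ∀ V : Ultrafilter ℕ, ufe V U} = clPS := by
    ext U
    exact part1 U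
  rw [hset, closure_kIdeal]
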